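/- arXiv:1602.06610 — 2 statements merged into one kernel-verified Lean document; each statement's English description precedes it below -/
import Mathlib

section
/- Finite mixtures of univariate normal densities are linearly independent: if ∑_{j=1}^k c_j φ(y|μ_j, σ_j²) = 0 for all y ∈ ℝ, where the pairs (μ_j, σ_j²) are distinct and σ_j² > 0, then c_j = 0 for all j. -/
open Finset Real

noncomputable def normalPDF (μ v y : ℝ) : ℝ :=
  (Real.sqrt (2 * Real.pi * v))⁻¹ * Real.exp (-(y - μ) ^ 2 / (2 * v))

open Filter Topology

lemma normalPDF_pos (μ v y : ℝ) (hv : 0 < v) : 0 < normalPDF μ v y := by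
  unfold normalPDF
  have h : 0 < Real.sqrt (2 * Real.pi * v) := Real.sqrt_pos.2 (by positivity)
  positivity

lemma exp_quad_tendsto_zero (a b d : ℝ) (h : a < 0 ∨ (a = 0 ∧ b < 0)) :
    Tendsto (fun y : ℝ => Real.exp (a * y ^ 2 + b * y + d)) atTop (𝓝 0) := by
  have hq : Tendsto (fun y : ℝ => a * y ^ 2 + b * y + d) atTop atBot := by
    rcases h with ha | ⟨ha, hb⟩
    · have h1 : Tendsto (fun y : ℝ => a * y + b) atTop atBot := by
        apply tendsto_atBot_add_const_right
        exact (tendsto_const_mul_atBot_of_neg ha).2 tendsto_id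
      have h2 : Tendsto (fun y : ℝ => (a * y + b) * y) atTop atBot :=
        h1.atBot_mul_atTop₀ tendsto_id
      have heq : (fun y : ℝ => a * y ^ 2 + b * y + d)
          = fun y : ℝ => (a * y + b) * y + d := by funext y; ring
      rw [heq]
      exact tendsto_atBot_add_const_right _ _ h2
    · subst ha
      have h1 : Tendsto (fun y : ℝ => b * y) atTop atBot := (tendsto_const_mul_atBot_of_neg hb).2 tendsto_id
      have heq : (fun y : ℝ => 0 * y ^ 2 + b * y + d) = fun y : ℝ => b * y + d := by
        funext y; ring
      rw [heq]
      exact tendsto_atBot_add_const_right _ _ h1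
  exact Real.tendsto_exp_atBot.comp hq

lemma ratio_tendsto_zero (μ1 v1 μ2 v2 : ℝ) (hv1 : 0 < v1) (hv2 : 0 < v2)
    (h : v1 < v2 ∨ (v1 = v2 ∧ μ1 < μ2)) :
    Tendsto (fun y => normalPDF μ1 v1 y * (normalPDF μ2 v2 y)⁻¹) atTop (𝓝 0) := by
  set a : ℝ := 1 / (2 * v2) - 1 / (2 * v1) with ha
  set b : ℝ := μ1 / v1 - μ2 / v2 with hb
  set d : ℝ := μ2 ^ 2 / (2 * v2) - μ1 ^ 2 / (2 * v1) with hd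
  have key : (fun y => normalPDF μ1 v1 y * (normalPDF μ2 v2 y)⁻¹)
      = fun y => (Real.sqrt (2 * Real.pi * v2) / Real.sqrt (2 * Real.pi * v1)) *
          Real.exp (a * y ^ 2 + b * y + d) := by
    funext y
    have hexp : Real.exp (-(y - μ1) ^ 2 / (2 * v1)) *
        (Real.exp (-(y - μ2) ^ 2 / (2 * v2)))⁻¹ = Real.exp (a * y ^ 2 + b * y + d) := by
      rw [← Real.exp_neg, ← Real.exp_add]
      congr 1
      rw [ha, hb, hd]
      field_simp
      ring
    unfold normalPDF
    rw [mul_inv, inv_inv, ← hexp]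
    ring
  rw [key]
  have hcond : a < 0 ∨ (a = 0 ∧ b < 0) := by
    rcases h with h1 | ⟨h1, h2⟩
    · left
      have : 1 / (2 * v2) < 1 / (2 * v1) :=
        one_div_lt_one_div_of_lt (by positivity) (by linarith)
      rw [ha]; linarith
    · right
      subst h1
      constructor
      · rw [ha]; ring
      · rw [hb]
        have : μ1 / v1 < μ2 / v1 := (div_lt_div_iff_of_pos_right hv1).2 h2
        linarith
  have := (exp_quad_tendsto_zero a b d hcond).const_mul
    (Real.sqrt (2 * Real.pi * v2) / Real.sqrt (2 * Real.pi * v1))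
  simpa using this

/-- Finite families of univariate normal densities with distinct (mean, variance) pairs
are linearly independent: if `∑ j, c j * φ(y | μ j, v j) = 0` for all `y`, then all
coefficients vanish. -/
theorem normal_densities_linear_independent (k : ℕ) (c μ v : Fin k → ℝ)
    (hv : ∀ j, 0 < v j)
    (hdist : ∀ i j : Fin k, i ≠ j → (μ i, v i) ≠ (μ j, v j))
    (hzero : ∀ y : ℝ, ∑ j, c j * normalPDF (μ j) (v j) y = 0) :
    ∀ j, c j = 0 := by
  by_contra hcon
  push_neg at hcon
  obtain ⟨j0, hj0⟩ := hcon
  set T : Finset (Fin k) := Finset.univ.filter (fun j => c j ≠ 0) with hT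
  have hTne : T.Nonempty := ⟨j0, by simp [hT, hj0]⟩
  set V : ℝ := T.sup' hTne v with hV
  have hT2ne : (T.filter (fun j => v j = V)).Nonempty := by
    obtain ⟨i, hi, hvi⟩ := Finset.exists_mem_eq_sup' hTne v
    exact ⟨i, by simp [hi, hV, ← hvi]⟩
  obtain ⟨js, hjs, hjsmax⟩ := Finset.exists_max_image _ μ hT2ne
  have hjsT : js ∈ T := (Finset.mem_filter.1 hjs).1
  have hjsV : v js = V := (Finset.mem_filter.1 hjs).2
  -- ordering condition for every other index with nonzero coefficient
  have hcond : ∀ j ∈ T, j ≠ js → v j < v js ∨ (v j = v js ∧ μ j < μ js) := by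
    intro j hjT hjne
    have hle : v j ≤ v js := by rw [hjsV, hV]; exact Finset.le_sup' v hjT
    rcases lt_or_eq_of_le hle with hlt | heq
    · exact Or.inl hlt
    · right
      refine ⟨heq, ?_⟩
      have hj2 : j ∈ T.filter (fun j => v j = V) := by
        refine Finset.mem_filter.2 ⟨hjT, ?_⟩
        rw [heq, hjsV]
      have hμle : μ j ≤ μ js := hjsmax j hj2
      rcases lt_or_eq_of_le hμle with h | h
      · exact h
      · exfalso
        exact hdist j js hjne (by rw [h, heq])
  have hsum : ∀ y : ℝ,
      ∑ j, c j * normalPDF (μ j) (v j) y * (normalPDF (μ js) (v js) y)⁻¹ = 0 := by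
    intro y
    rw [← Finset.sum_mul, hzero y, zero_mul]
  have htend : Tendsto
      (fun y => ∑ j, c j * normalPDF (μ j) (v j) y * (normalPDF (μ js) (v js) y)⁻¹)
      atTop (𝓝 (c js)) := by
    have hrw : c js = ∑ j, (if j = js then c js else 0) := by simp
    rw [hrw]
    apply tendsto_finset_sum
    intro j _
    by_cases hj : j = js
    · subst hj
      simp only [if_pos rfl]
      have heq : (fun y => c j * normalPDF (μ j) (v j) y * (normalPDF (μ j) (v j) y)⁻¹)
          = fun _ => c j := by
        funext y
        rw [mul_assoc, mul_inv_cancel₀ (ne_of_gt (normalPDF_pos _ _ _ (hv j))), mul_one]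
      rw [heq]
      exact tendsto_const_nhds
    · simp only [if_neg hj]
      by_cases hc : c j = 0
      · simp only [hc, zero_mul]; exact tendsto_const_nhds
      · have hjT : j ∈ T := by simp [hT, hc]
        have := (ratio_tendsto_zero (μ j) (v j) (μ js) (v js) (hv j) (hv js)
          (hcond j hjT hj)).const_mul (c j)
        simpa [mul_assoc] using this
  have hzero' : Tendsto
      (fun y => ∑ j, c j * normalPDF (μ j) (v j) y * (normalPDF (μ js) (v js) y)⁻¹)
      atTop (𝓝 0) := by
    simp only [hsum]
    exact tendsto_const_nhds
  have : c js = 0 := tendsto_nhds_unique htend hzero'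
  exact (Finset.mem_filter.1 hjsT).2 this
end

section
/- If a function g : ℝ^p → ℝ satisfies g(x) = F(αᵀx) = G(βᵀx) for all x ∈ ℝ^p, where α, β are unit vectors and F, G : ℝ → ℝ are differentiable with F' not identically zero, then β = ±α and G(t) = F(±t) accordingly. -/
/-- Basic identifiability of the index in a single-index model: if
`g(x) = F(⟪α, x⟫) = G(⟪β, x⟫)` for all `x ∈ ℝ^p`, with `α, β` unit vectors and `F, G`
differentiable, `F'` not identically zero, then `β = α` and `G = F`, or `β = -α` and
`G(t) = F(-t)`. -/
theorem single_index_link_identifiable (p : ℕ) (hp : 1 ≤ p)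
    (α β : EuclideanSpace ℝ (Fin p)) (hα : ‖α‖ = 1) (hβ : ‖β‖ = 1)
    (F G : ℝ → ℝ) (hF : Differentiable ℝ F) (hG : Differentiable ℝ G)
    (hF' : ∃ t : ℝ, deriv F t ≠ 0)
    (hagree : ∀ x : EuclideanSpace ℝ (Fin p), F (inner ℝ α x) = G (inner ℝ β x)) :
    (β = α ∧ ∀ t : ℝ, G t = F t) ∨ (β = -α ∧ ∀ t : ℝ, G t = F (-t)) := by
  set c : ℝ := inner ℝ α β with hc
  -- F t = G (c t)
  have h1 : ∀ t : ℝ, F t = G (c * t) := by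
    intro t
    have h := hagree (t • α)
    have hba : (inner ℝ β α : ℝ) = c := by rw [hc]; exact real_inner_comm α β
    rw [real_inner_smul_right, real_inner_smul_right, real_inner_self_eq_norm_sq, hα,
      hba] at h
    simpa [mul_comm] using h
  -- G t = F (c t)
  have h2 : ∀ t : ℝ, G t = F (c * t) := by
    intro t
    have h := (hagree (t • β)).symm
    rw [real_inner_smul_right, real_inner_smul_right, real_inner_self_eq_norm_sq, hβ] at h
    rw [hc]
    simpa [mul_comm] using h
  have habs : |c| ≤ 1 := by
    have := abs_real_inner_le_norm α β
    simpa [hα, hβ] using this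
  -- key : F t = F (c^2 t)
  have hkey : ∀ t : ℝ, F t = F (c ^ 2 * t) := by
    intro t
    rw [h1 t, h2 (c * t)]
    ring_nf
  -- if |c| < 1, contradiction
  have hcase : |c| = 1 := by
    by_contra h
    have hlt : |c| < 1 := lt_of_le_of_ne habs h
    have hc2 : |c ^ 2| < 1 := by
      rw [abs_pow]
      nlinarith [abs_nonneg c]
    have hconst : ∀ t : ℝ, F t = F 0 := by
      intro t
      have hiter : ∀ n : ℕ, F t = F ((c ^ 2) ^ n * t) := by
        intro n
        induction n with
        | zero => simp
        | succ n ih =>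
          rw [ih, hkey ((c ^ 2) ^ n * t)]
          ring_nf
      have htend : Filter.Tendsto (fun n : ℕ => F ((c ^ 2) ^ n * t)) Filter.atTop
          (nhds (F 0)) := by
        have h0 : Filter.Tendsto (fun n : ℕ => (c ^ 2) ^ n * t) Filter.atTop (nhds 0) := by
          simpa using (tendsto_pow_atTop_nhds_zero_of_abs_lt_one hc2).mul_const t
        exact (hF.continuous.continuousAt (x := (0:ℝ))).tendsto.comp h0
      have : Filter.Tendsto (fun _ : ℕ => F t) Filter.atTop (nhds (F 0)) := by
        simpa [← hiter] using htend
      exact (tendsto_nhds_unique this tendsto_const_nhds).symm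
    obtain ⟨t₀, ht₀⟩ := hF'
    apply ht₀
    have : F = fun _ => F 0 := funext hconst
    rw [this]
    simp
  rcases abs_eq (by norm_num : (0:ℝ) ≤ 1) |>.mp hcase with h1' | h1'
  · left
    constructor
    · have : (inner ℝ α β : ℝ) = 1 := by rw [← hc]; exact h1'
      exact (inner_eq_one_iff_of_norm_eq_one hα hβ).mp this |>.symm
    · intro t; rw [h2 t, h1']; ring_nf
  · right
    constructor
    · have : (inner ℝ α (-β) : ℝ) = 1 := by simp [← hc, h1']
      have := (inner_eq_one_iff_of_norm_eq_one hα (by simpa using hβ)).mp this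
      simpa [neg_eq_iff_eq_neg] using this.symm
    · intro t; rw [h2 t, h1']; ring_nf
end
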